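/- Define f(t) = (1+t)e^{−t}. There exist constants m₀, depending only on N, such that for all integers m ≥ m₀ and all t with t ≤ −log(m)/√m (and t > −1), one has f(t)^m ≤ m^{−N}. -/

import Mathlib

lemma aux_log_le_stmt7 (t : ℝ) (h1 : -1 < t) (h2 : t ≤ 0) :
    Real.log (1 + t) ≤ t - t ^ 2 / 2 := by
  rcases eq_or_lt_of_le h2 with rfl | h2'
  · simp
  set g : ℝ → ℝ := fun x => x - x ^ 2 / 2 - Real.log (1 + x) with hg
  have key : ∀ x ∈ Set.Icc t 0, HasDerivAt g (1 - x - 1 / (1 + x)) x := by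
    intro x hx
    have hx1 : 0 < 1 + x := by have := hx.1; linarith
    have hA : HasDerivAt (fun x : ℝ => 1 + x) 1 x := by
      simpa using (hasDerivAt_id x).const_add 1
    have hB : HasDerivAt (fun x : ℝ => Real.log (1 + x)) (1 / (1 + x)) x := by
      have := (Real.hasDerivAt_log hx1.ne').comp x hA
      simpa [one_div, Function.comp_def] using this
    have hC : HasDerivAt (fun x : ℝ => x - x ^ 2 / 2) (1 - x) x := by
      have := (hasDerivAt_id x).sub ((hasDerivAt_pow 2 x).div_const 2)
      exact this.congr_deriv (by ring)
    exact hC.sub hB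
  have hanti : AntitoneOn g (Set.Icc t 0) := by
    apply antitoneOn_of_deriv_nonpos (convex_Icc t 0)
    · exact fun x hx => (key x hx).continuousAt.continuousWithinAt
    · intro x hx
      rw [interior_Icc] at hx
      exact (key x (Set.mem_Icc_of_Ioo hx)).differentiableAt.differentiableWithinAt
    · intro x hx
      rw [interior_Icc] at hx
      rw [(key x (Set.mem_Icc_of_Ioo hx)).deriv]
      have hx1 : 0 < 1 + x := by have := hx.1; linarith
      have h1 : 1 - x ≤ 1 / (1 + x) := by
        rw [le_div_iff₀ hx1]; nlinarith [sq_nonneg x]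
      linarith
  have h0 : g 0 ≤ g t :=
    hanti ⟨le_refl t, h2⟩ ⟨h2, le_refl 0⟩ h2
  simp only [hg] at h0
  simp at h0
  linarith

theorem stmt_7 (N : ℕ) :
    ∃ m₀ : ℕ, ∀ m : ℕ, m₀ ≤ m → ∀ t : ℝ, -1 < t →
      t ≤ -Real.log m / Real.sqrt m →
      ((1 + t) * Real.exp (-t)) ^ m ≤ 1 / (m : ℝ) ^ N := by
  refine ⟨⌈Real.exp (2 * N)⌉₊ + 1, fun m hm t ht hts => ?_⟩
  have hexp : Real.exp (2 * N) ≤ (m : ℝ) := by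
    calc Real.exp (2 * N) ≤ (⌈Real.exp (2 * N)⌉₊ : ℝ) := Nat.le_ceil _
    _ ≤ (m : ℝ) := by exact_mod_cast Nat.le_of_succ_le hm
  have hm0 : 0 < (m : ℝ) := lt_of_lt_of_le (Real.exp_pos _) hexp
  have hlogm : (2 * N : ℝ) ≤ Real.log m := (Real.le_log_iff_exp_le hm0).mpr hexp
  have hlog0 : (0 : ℝ) ≤ Real.log m := by positivity
  have hsq : 0 < Real.sqrt m := Real.sqrt_pos.mpr hm0
  have hs0 : -Real.log m / Real.sqrt m ≤ 0 := by
    apply div_nonpos_of_nonpos_of_nonneg <;> [linarith; positivity]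
  have ht0 : t ≤ 0 := hts.trans hs0
  have h1t : 0 < 1 + t := by linarith
  -- step 1: (1+t) * exp(-t) ≤ exp(-t^2/2)
  have step1 : (1 + t) * Real.exp (-t) ≤ Real.exp (-(t ^ 2) / 2) := by
    have hlog := aux_log_le_stmt7 t ht ht0
    have h1 : 1 + t ≤ Real.exp (t - t ^ 2 / 2) := by
      rw [← Real.exp_log h1t]
      exact Real.exp_le_exp.mpr hlog
    calc (1 + t) * Real.exp (-t) ≤ Real.exp (t - t ^ 2 / 2) * Real.exp (-t) :=
          mul_le_mul_of_nonneg_right h1 (Real.exp_pos _).le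
      _ = Real.exp (-(t ^ 2) / 2) := by rw [← Real.exp_add]; ring_nf
  -- step 2: power
  have step2 : ((1 + t) * Real.exp (-t)) ^ m ≤ Real.exp ((m : ℝ) * (-(t ^ 2) / 2)) := by
    calc ((1 + t) * Real.exp (-t)) ^ m ≤ (Real.exp (-(t ^ 2) / 2)) ^ m :=
          pow_le_pow_left₀ (by positivity) step1 m
      _ = Real.exp ((m : ℝ) * (-(t ^ 2) / 2)) := by rw [← Real.exp_nat_mul]
  -- step 3: t^2 ≥ (log m)^2 / m
  have hsqm : Real.sqrt m ^ 2 = (m : ℝ) := Real.sq_sqrt hm0.le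
  have ht2 : (Real.log m / Real.sqrt m) ^ 2 ≤ t ^ 2 := by
    have h1 : t ≤ -(Real.log m / Real.sqrt m) := by
      rw [neg_div] at hts; exact hts
    have h2 : 0 ≤ Real.log m / Real.sqrt m := by positivity
    nlinarith
  have hmt : (m : ℝ) * (-(t ^ 2) / 2) ≤ -(Real.log m) ^ 2 / 2 := by
    have h3 : (Real.log m) ^ 2 / (m : ℝ) ≤ t ^ 2 := by
      have : (Real.log m / Real.sqrt m) ^ 2 = (Real.log m) ^ 2 / (m : ℝ) := by
        rw [div_pow, hsqm]
      linarith [ht2, this ▸ ht2]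
    have := (div_le_iff₀ hm0).mp h3
    nlinarith
  have hfin : -(Real.log m) ^ 2 / 2 ≤ -(N : ℝ) * Real.log m := by nlinarith
  calc ((1 + t) * Real.exp (-t)) ^ m ≤ Real.exp ((m : ℝ) * (-(t ^ 2) / 2)) := step2
    _ ≤ Real.exp (-(N : ℝ) * Real.log m) := Real.exp_le_exp.mpr (hmt.trans hfin)
    _ = 1 / (m : ℝ) ^ N := by
        rw [neg_mul, Real.exp_neg, Real.exp_nat_mul, Real.exp_log hm0, one_div]
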